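/- For $j = 1, \dots, n$, let $K_1, \dots, K_n \subseteq \mathbb{T}$ be pairwise disjoint measurable sets of positive Lebesgue measure, each invariant under $t \mapsto t^{-1}$. Then the operators $M(\chi_{K_1}), \dots, M(\chi_{K_n})$ on $H^2(\mathbb{T})$ are nonzero idempotents with $M(\chi_{K_i})M(\chi_{K_j}) = 0$ for $i \ne j$, and hence $\dim \operatorname{im} M(\chi_{K_1 \cup \cdots \cup K_n}) \ge n$. Consequently, if $K \subseteq \mathbb{T}$ is even and has positive measure, then $\operatorname{im} M(\chi_K)$ is infinite dimensional. -/

import Mathlib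

open MeasureTheory Complex Real
noncomputable section
namespace TH

abbrev Tp : ℝ := 2 * Real.pi
instance : Fact (0 < Tp) := ⟨by positivity⟩
abbrev 𝕋 := AddCircle Tp
abbrev μ : Measure 𝕋 := AddCircle.haarAddCircle
abbrev L2 := Lp ℂ 2 μ

open scoped Classical in
/-- Multiplication operator by `φ` (defined to be `0` if `φ` is not essentially bounded). -/
def Lmul (φ : 𝕋 → ℂ) : L2 →L[ℂ] L2 :=
  if hφ : MemLp φ ⊤ μ then
    LinearMap.mkContinuous
      { toFun := fun f => ((Lp.memLp f).smul (r := 2) hφ).toLp (φ • ⇑f)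
        map_add' := fun f g => by
          rw [← MemLp.toLp_add]
          exact MemLp.toLp_congr _ _ (by
            filter_upwards [Lp.coeFn_add f g] with x hx
            simp only [Pi.smul_apply, smul_eq_mul, Pi.mul_apply, hx, Pi.add_apply, mul_add])
        map_smul' := fun c f => by
          rw [RingHom.id_apply, ← MemLp.toLp_const_smul]
          exact MemLp.toLp_congr ((Lp.memLp (c • f)).smul (r := 2) hφ)
            (((Lp.memLp f).smul (r := 2) hφ).const_smul c) (by
            filter_upwards [Lp.coeFn_smul c f] with x hx
            simp only [Pi.smul_apply, smul_eq_mul, Pi.mul_apply, hx]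
            ring) }
      (eLpNorm φ ⊤ μ).toReal
      (fun f => by
        simp only [LinearMap.coe_mk, AddHom.coe_mk]
        rw [Lp.norm_toLp, Lp.norm_def, ← ENNReal.toReal_mul]
        refine ENNReal.toReal_mono ?_ ?_
        · exact ENNReal.mul_ne_top hφ.eLpNorm_ne_top (Lp.eLpNorm_ne_top f)
        · exact eLpNorm_smul_le_eLpNorm_top_mul_eLpNorm 2 (Lp.aestronglyMeasurable f) φ)
  else 0

/-- Composition with `x ↦ -x` on `L²`. -/
def Cneg : L2 → L2 :=
  Lp.compMeasurePreserving (fun x : 𝕋 => -x) (Measure.measurePreserving_neg μ)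

/-- The flip operator `J : f(t) ↦ t⁻¹ f(t⁻¹)`. -/
def Jop : L2 →L[ℂ] L2 :=
  { toFun := fun f => Lmul (fun x => fourier (-1) x) (Cneg f)
    map_add' := fun f g => by
      show Lmul _ (Cneg (f + g)) = Lmul _ (Cneg f) + Lmul _ (Cneg g)
      unfold Cneg
      rw [map_add, map_add]
    map_smul' := fun c f => by
      show Lmul _ (Cneg (c • f)) = c • Lmul _ (Cneg f)
      rw [← map_smul (Lmul fun x => fourier (-1) x)]
      congr 1
      apply Lp.ext
      unfold Cneg
      filter_upwards [Lp.coeFn_compMeasurePreserving (c • f) (Measure.measurePreserving_neg μ),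
        Lp.coeFn_smul c (Lp.compMeasurePreserving (fun x : 𝕋 => -x)
          (Measure.measurePreserving_neg μ) f),
        (Measure.measurePreserving_neg μ).quasiMeasurePreserving.ae_eq_comp (Lp.coeFn_smul c f),
        Lp.coeFn_compMeasurePreserving f (Measure.measurePreserving_neg μ)]
        with x hx1 hx2 hx3 hx4
      refine hx1.trans (hx3.trans ?_)
      have h5 : ((c • (↑↑f : 𝕋 → ℂ)) ∘ Neg.neg) x = c • (↑↑f ∘ Neg.neg) x := rfl
      rw [h5, ← hx4]
      exact hx2.symm
    cont := by
      exact (Lmul _).continuous.comp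
        (Lp.isometry_compMeasurePreserving (E := ℂ) (p := 2)
          (Measure.measurePreserving_neg μ)).continuous }

/-- The Hardy space `H²(𝕋)`: closed span of `{t^n : n ≥ 0}`. -/
def Hardy : Submodule ℂ L2 :=
  (Submodule.span ℂ (Set.range fun n : ℕ => (fourierLp 2 (n : ℤ) : L2))).topologicalClosure

instance : CompleteSpace Hardy :=
  (Submodule.isClosed_topologicalClosure _).completeSpace_coe

/-- The Riesz projection, as an operator on `L²(𝕋)`. -/
def Pproj : L2 →L[ℂ] L2 := Hardy.subtypeL ∘L Hardy.orthogonalProjectionOnto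

/-- The Toeplitz operator `T(φ) : f ↦ P(φ f)` on `H²`. -/
def Top (φ : 𝕋 → ℂ) : Hardy →L[ℂ] Hardy :=
  Hardy.orthogonalProjectionOnto ∘L Lmul φ ∘L Hardy.subtypeL

/-- The Hankel operator `H(φ) : f ↦ P(φ · Jf)` on `H²`. -/
def Hop (φ : 𝕋 → ℂ) : Hardy →L[ℂ] Hardy :=
  Hardy.orthogonalProjectionOnto ∘L Lmul φ ∘L Jop ∘L Hardy.subtypeL

/-- The Toeplitz + Hankel operator `M(φ) = T(φ) + H(φ)`. -/
def Mop (φ : 𝕋 → ℂ) : Hardy →L[ℂ] Hardy := Top φ + Hop φ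

/-- The flip `φ̃(t) = φ(t⁻¹)` of a function on the circle. -/
def flip (φ : 𝕋 → ℂ) : 𝕋 → ℂ := fun x => φ (-x)



section Lemmas

variable {φ ψ : 𝕋 → ℂ}

theorem Lmul_coeFn (hφ : MemLp φ ⊤ μ) (f : L2) :
    Lmul φ f =ᵐ[μ] fun x => φ x * f x := by
  classical
  rw [Lmul, dif_pos hφ]
  exact ((Lp.memLp f).smul (r := 2) hφ).coeFn_toLp

theorem Lmul_congr (h : φ =ᵐ[μ] ψ) : Lmul φ = Lmul ψ := by
  classical
  by_cases hφ : MemLp φ ⊤ μ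
  · have hψ : MemLp ψ ⊤ μ := hφ.ae_eq h
    ext f
    filter_upwards [Lmul_coeFn hφ f, Lmul_coeFn hψ f, h] with x h1 h2 h3
    rw [h1, h2, h3]
  · have hψ : ¬ MemLp ψ ⊤ μ := fun hψ => hφ (hψ.ae_eq h.symm)
    rw [Lmul, dif_neg hφ, Lmul, dif_neg hψ]

theorem Lmul_zero : Lmul (0 : 𝕋 → ℂ) = 0 := by
  ext f
  have h0 : MemLp (0 : 𝕋 → ℂ) ⊤ μ := memLp_top_const (0:ℂ) |>.ae_eq (by rfl)
  filter_upwards [Lmul_coeFn h0 f, Lp.coeFn_zero ℂ 2 μ] with x h1 h2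
  show ((Lmul 0) f) x = (0 : L2) x
  rw [h1, h2]
  simp

theorem Lmul_comp (hφ : MemLp φ ⊤ μ) (hψ : MemLp ψ ⊤ μ) (hφψ : MemLp (φ * ψ) ⊤ μ) :
    Lmul φ ∘L Lmul ψ = Lmul (φ * ψ) := by
  ext f
  filter_upwards [Lmul_coeFn hφ (Lmul ψ f), Lmul_coeFn hψ f, Lmul_coeFn hφψ f] with x h1 h2 h3
  show ((Lmul φ) ((Lmul ψ) f)) x = _
  rw [h1, h2, h3]
  simp only [Pi.mul_apply]
  ring

theorem Lmul_add (hφ : MemLp φ ⊤ μ) (hψ : MemLp ψ ⊤ μ) :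
    Lmul (φ + ψ) = Lmul φ + Lmul ψ := by
  ext f
  filter_upwards [Lmul_coeFn (hφ.add hψ) f, Lmul_coeFn hφ f, Lmul_coeFn hψ f,
    Lp.coeFn_add (Lmul φ f) (Lmul ψ f)] with x h1 h2 h3 h4
  show _ = ((Lmul φ) f + (Lmul ψ) f) x
  rw [h1, h4]
  simp only [Pi.add_apply, h2, h3]
  ring

theorem memtop_indicator {K : Set 𝕋} (hK : MeasurableSet K) :
    MemLp (Set.indicator K (1 : 𝕋 → ℂ)) ⊤ μ :=
  (memLp_top_const (1:ℂ)).indicator hK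

end Lemmas
section JopLemmas

variable {φ : 𝕋 → ℂ}

theorem memtop_fourier (n : ℤ) : MemLp (fun x => fourier n x : 𝕋 → ℂ) ⊤ μ := by
  refine memLp_top_of_bound ((map_continuous (fourier n)).aestronglyMeasurable) 1 ?_
  filter_upwards with x
  rw [fourier_apply]
  exact le_of_eq (Circle.norm_coe _)

theorem ae_comp_neg {f g : 𝕋 → ℂ} (h : f =ᵐ[μ] g) :
    (fun x : 𝕋 => f (-x)) =ᵐ[μ] fun x => g (-x) :=
  (Measure.measurePreserving_neg μ).quasiMeasurePreserving.ae_eq_comp h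

theorem fourier_neg_arg {n : ℤ} {x : 𝕋} : fourier n (-x) = fourier (-n) x := by
  rw [fourier_apply, smul_neg, fourier_neg', ← fourier_neg]

theorem Cneg_coeFn (f : L2) : (Cneg f : 𝕋 → ℂ) =ᵐ[μ] fun x => f (-x) :=
  Lp.coeFn_compMeasurePreserving f (Measure.measurePreserving_neg μ)

theorem Jop_coeFn (f : L2) :
    (Jop f : 𝕋 → ℂ) =ᵐ[μ] fun x => fourier (-1) x * f (-x) := by
  have h1 : Jop f = Lmul (fun x => fourier (-1) x) (Cneg f) := rfl
  rw [h1]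
  filter_upwards [Lmul_coeFn (memtop_fourier (-1)) (Cneg f), Cneg_coeFn f] with x h2 h3
  rw [h2, h3]

theorem Jop_Jop (f : L2) : Jop (Jop f) = f := by
  apply Lp.ext
  filter_upwards [Jop_coeFn (Jop f), ae_comp_neg (Jop_coeFn f)] with x h1 h2
  rw [h1, h2]
  simp only [neg_neg, fourier_neg_arg, neg_neg]
  rw [← mul_assoc, ← fourier_add]
  norm_num [fourier_zero]

theorem Jop_Lmul (hφ : MemLp φ ⊤ μ) (f : L2) :
    Jop (Lmul φ f) = Lmul (flip φ) (Jop f) := by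
  have hflip : MemLp (flip φ) ⊤ μ :=
    hφ.comp_measurePreserving (Measure.measurePreserving_neg μ)
  apply Lp.ext
  filter_upwards [Jop_coeFn (Lmul φ f), ae_comp_neg (Lmul_coeFn hφ f),
    Lmul_coeFn hflip (Jop f), Jop_coeFn f] with x h1 h2 h3 h4
  rw [h1, h2, h3, h4]
  show fourier (-1) x * (φ (-x) * _) = φ (-x) * _
  ring

end JopLemmas
section HardyLemmas

theorem fourierLp_mem_Hardy (n : ℕ) : (fourierLp 2 (n:ℤ) : L2) ∈ Hardy :=
  Submodule.le_topologicalClosure _ (Submodule.subset_span ⟨n, rfl⟩)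

theorem inner_fourierLp (f : L2) (m : ℤ) :
    (inner ℂ (fourierLp 2 m : L2) f : ℂ) = fourierCoeff (f : 𝕋 → ℂ) m := by
  calc (inner ℂ (fourierLp 2 m : L2) f : ℂ)
      = (inner ℂ (fourierBasis (T := Tp) m) f : ℂ) := by rw [coe_fourierBasis]
    _ = fourierBasis.repr f m := (fourierBasis.repr_apply_apply f m).symm
    _ = fourierCoeff (f : 𝕋 → ℂ) m := fourierBasis_repr f m

theorem mem_Hardy_orth_iff (f : L2) :
    f ∈ Hardyᗮ ↔ ∀ n : ℕ, fourierCoeff (f : 𝕋 → ℂ) (n:ℤ) = 0 := by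
  constructor
  · intro h n
    have := Submodule.inner_right_of_mem_orthogonal (fourierLp_mem_Hardy n) h
    rwa [inner_fourierLp] at this
  · intro h
    rw [Submodule.mem_orthogonal]
    intro u hu
    rw [inner_eq_zero_symm]
    have hker : Hardy ≤ LinearMap.ker (innerSL ℂ f : L2 →ₗ[ℂ] ℂ) := by
      apply Submodule.topologicalClosure_minimal
      · rw [Submodule.span_le]
        rintro - ⟨n, rfl⟩
        simp only [SetLike.mem_coe, LinearMap.mem_ker]
        show (inner ℂ f (fourierLp 2 (n:ℤ) : L2) : ℂ) = 0
        rw [← inner_eq_zero_symm, inner_fourierLp]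
        exact h n
      · exact ContinuousLinearMap.isClosed_ker _
    exact hker hu

theorem fourierCoeff_neg_of_mem_Hardy {f : L2} (hf : f ∈ Hardy) {m : ℤ} (hm : m < 0) :
    fourierCoeff (f : 𝕋 → ℂ) m = 0 := by
  have horth : (fourierLp 2 m : L2) ∈ Hardyᗮ := by
    rw [mem_Hardy_orth_iff]
    intro n
    rw [← inner_fourierLp]
    have hob := orthonormal_fourier (T := Tp)
    rw [orthonormal_iff_ite] at hob
    rw [hob]
    have : (n:ℤ) ≠ m := by omega
    simp [this]
  have h0 : (inner ℂ (fourierLp 2 m : L2) f : ℂ) = 0 :=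
    Submodule.inner_left_of_mem_orthogonal hf horth
  rw [← inner_fourierLp]
  exact h0

theorem mem_Hardy_of_coeff {f : L2} (h : ∀ m : ℤ, m < 0 → fourierCoeff (f : 𝕋 → ℂ) m = 0) :
    f ∈ Hardy := by
  have hsum : HasSum (fun i : ℤ => fourierBasis.repr f i • (fourierLp 2 i : L2)) f := by
    have := fourierBasis.hasSum_repr f
    rwa [coe_fourierBasis] at this
  refine IsClosed.mem_of_tendsto (Submodule.isClosed_topologicalClosure _) hsum ?_
  filter_upwards with s
  refine Submodule.sum_mem _ fun i _ => ?_
  rcases lt_or_ge i 0 with hi | hi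
  · rw [fourierBasis_repr, h i hi, zero_smul]
    exact Submodule.zero_mem _
  · refine Submodule.smul_mem _ _ ?_
    obtain ⟨k, rfl⟩ : ∃ k : ℕ, (k:ℤ) = i := ⟨i.toNat, Int.toNat_of_nonneg hi⟩
    exact fourierLp_mem_Hardy k

theorem fourierCoeff_Jop (f : L2) (n : ℤ) :
    fourierCoeff (Jop f : 𝕋 → ℂ) n = fourierCoeff (f : 𝕋 → ℂ) (-n - 1) := by
  have h1 : fourierCoeff (Jop f : 𝕋 → ℂ) n
      = ∫ x, fourier (-n - 1) x * f (-x) ∂μ := by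
    rw [fourierCoeff]
    refine integral_congr_ae ?_
    filter_upwards [Jop_coeFn f] with x hx
    rw [smul_eq_mul, hx]
    rw [← mul_assoc, ← fourier_add]
    have he : -n + -1 = -n - 1 := by ring
    rw [he]
  rw [h1, fourierCoeff]
  have h2 := (Measure.measurePreserving_neg μ).integral_comp
    (MeasurableEquiv.neg 𝕋).measurableEmbedding
    (fun y : 𝕋 => fourier (-n - 1) y * f (-y))
  rw [← h2]
  refine integral_congr_ae ?_
  filter_upwards with x
  show fourier (-n - 1) (-x) * f (- -x) = fourier (-(-n - 1)) x • f x
  rw [smul_eq_mul, fourier_neg_arg, neg_neg]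

theorem Jop_mem_orth {f : L2} (hf : f ∈ Hardy) : Jop f ∈ Hardyᗮ := by
  rw [mem_Hardy_orth_iff]
  intro n
  rw [fourierCoeff_Jop]
  exact fourierCoeff_neg_of_mem_Hardy hf (by omega)

theorem Jop_mem_Hardy {f : L2} (hf : f ∈ Hardyᗮ) : Jop f ∈ Hardy := by
  apply mem_Hardy_of_coeff
  intro m hm
  rw [fourierCoeff_Jop]
  obtain ⟨k, hk⟩ : ∃ k : ℕ, (k:ℤ) = -m - 1 := ⟨(-m-1).toNat, Int.toNat_of_nonneg (by omega)⟩
  rw [← hk]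
  exact (mem_Hardy_orth_iff f).1 hf k

/-- Key decomposition : if `J g = g` then `g = P g + J (P g)`. -/
theorem key_decomp {g : L2} (hg : Jop g = g) :
    (Hardy.orthogonalProjectionOnto g : L2) + Jop (Hardy.orthogonalProjectionOnto g : L2) = g := by
  set p : L2 := (Hardy.orthogonalProjectionOnto g : L2) with hp
  have hpH : p ∈ Hardy := (Hardy.orthogonalProjectionOnto g).2
  have hq : g - p ∈ Hardyᗮ := Submodule.sub_starProjection_mem_orthogonal g
  have hJp : Jop p ∈ Hardyᗮ := Jop_mem_orth hpH
  have hJq : Jop (g - p) ∈ Hardy := Jop_mem_Hardy hq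
  have hsum : Jop p + Jop (g - p) = g := by
    rw [← map_add, add_sub_cancel, hg]
  have key : Jop (g - p) - p = (g - p) - Jop p := by
    rw [sub_eq_sub_iff_add_eq_add, add_comm (g - p) p]
    rw [add_comm (Jop (g - p)) (Jop p), hsum, add_sub_cancel]
  have hmem1 : Jop (g - p) - p ∈ Hardy := Submodule.sub_mem _ hJq hpH
  have hmem2 : Jop (g - p) - p ∈ Hardyᗮ := by
    rw [key]; exact Submodule.sub_mem _ hq hJp
  have hzero : Jop (g - p) - p = 0 := by
    have := (Submodule.orthogonal_disjoint Hardy).le_bot ⟨hmem1, hmem2⟩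
    simpa using this
  have hJgp : Jop (g - p) = p := by rwa [sub_eq_zero] at hzero
  have h3 : g - p = Jop p := by rw [← Jop_Jop (g - p), hJgp]
  rw [← h3]
  abel

end HardyLemmas
section MopLemmas

variable {α β : 𝕋 → ℂ}

theorem Mop_apply (φ : 𝕋 → ℂ) (x : Hardy) :
    Mop φ x = Hardy.orthogonalProjectionOnto (Lmul φ ((x : L2) + Jop (x : L2))) := by
  rw [Mop, ContinuousLinearMap.add_apply, map_add, map_add]
  rw [Top, Hop]
  rfl

theorem Mop_mul (hα : MemLp α ⊤ μ) (hβ : MemLp β ⊤ μ) (hαβ : MemLp (α * β) ⊤ μ)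
    (hβe : flip β =ᵐ[μ] β) : Mop α ∘L Mop β = Mop (α * β) := by
  refine ContinuousLinearMap.ext fun x => ?_
  set g : L2 := Lmul β ((x : L2) + Jop (x : L2)) with hgdef
  have hJg : Jop g = g := by
    rw [hgdef, Jop_Lmul hβ, Lmul_congr hβe, map_add, Jop_Jop, add_comm]
  have hMβ : Mop β x = Hardy.orthogonalProjectionOnto g := Mop_apply β x
  have hcoe : ((Mop β x : Hardy) : L2) = (Hardy.orthogonalProjectionOnto g : L2) := by rw [hMβ]
  calc (Mop α ∘L Mop β) x = Mop α (Mop β x) := rfl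
    _ = Hardy.orthogonalProjectionOnto (Lmul α (((Mop β x : Hardy) : L2) + Jop ((Mop β x : Hardy) : L2))) :=
        Mop_apply α (Mop β x)
    _ = Hardy.orthogonalProjectionOnto (Lmul α g) := by rw [hcoe, key_decomp hJg]
    _ = Mop (α * β) x := by
        rw [Mop_apply (α * β) x, ← Lmul_comp hα hβ hαβ]
        rfl

theorem Mop_zero : Mop (0 : 𝕋 → ℂ) = 0 := by
  refine ContinuousLinearMap.ext fun x => ?_
  rw [Mop_apply, Lmul_zero]
  simp

theorem Mop_add (hα : MemLp α ⊤ μ) (hβ : MemLp β ⊤ μ) :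
    Mop (α + β) = Mop α + Mop β := by
  refine ContinuousLinearMap.ext fun x => ?_
  rw [ContinuousLinearMap.add_apply, Mop_apply, Mop_apply, Mop_apply, Lmul_add hα hβ,
    ContinuousLinearMap.add_apply, map_add]

end MopLemmas

theorem Mop_congr {α β : 𝕋 → ℂ} (h : α =ᵐ[μ] β) : Mop α = Mop β := by
  rw [Mop, Mop, Top, Top, Hop, Hop, Lmul_congr h]
section NonZero

theorem fourierCoeff_congr_ae {f g : 𝕋 → ℂ} (h : f =ᵐ[μ] g) (n : ℤ) :
    fourierCoeff f n = fourierCoeff g n := by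
  rw [fourierCoeff, fourierCoeff]
  refine integral_congr_ae ?_
  filter_upwards [h] with x hx
  rw [hx]

theorem fourierCoeff_as_inner (f : L2) (n : ℤ) :
    fourierCoeff (f : 𝕋 → ℂ) n = (inner ℂ (fourierLp 2 n : L2) f : ℂ) :=
  (inner_fourierLp f n).symm

theorem Mop_indicator_ne_zero {K : Set 𝕋} (hK : MeasurableSet K) (hpos : 0 < μ K) :
    Mop (Set.indicator K (1 : 𝕋 → ℂ)) ≠ 0 := by
  intro h0
  set χ : 𝕋 → ℂ := Set.indicator K (1 : 𝕋 → ℂ) with hχdef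
  have hχ : MemLp χ ⊤ μ := memtop_indicator hK
  set e0 : Hardy := ⟨fourierLp 2 ((0:ℕ):ℤ), fourierLp_mem_Hardy 0⟩ with he0
  have h1 : Mop χ e0 = 0 := by rw [h0]; rfl
  rw [Mop_apply] at h1
  have hgo : Lmul χ ((e0 : L2) + Jop (e0 : L2)) ∈ Hardyᗮ :=
    Submodule.orthogonalProjectionOnto_eq_zero_iff.mp h1
  -- split g = A + B
  have hsplit : Lmul χ ((e0 : L2) + Jop (e0 : L2))
      = Lmul χ (e0 : L2) + Lmul χ (Jop (e0 : L2)) := map_add _ _ _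
  -- coefficients of the two pieces
  have he0coe : ((e0 : L2) : 𝕋 → ℂ) =ᵐ[μ] fun _ => (1:ℂ) := by
    filter_upwards [coeFn_fourierLp (T := Tp) 2 ((0:ℕ):ℤ)] with x hx
    rw [he0] at *
    rw [hx]
    exact fourier_zero
  have hA : ((Lmul χ (e0 : L2) : L2) : 𝕋 → ℂ) =ᵐ[μ] χ := by
    filter_upwards [Lmul_coeFn hχ (e0 : L2), he0coe] with x h1 h2
    rw [h1, h2, mul_one]
  have hB : ((Lmul χ (Jop (e0 : L2)) : L2) : 𝕋 → ℂ) =ᵐ[μ] fun x => χ x * fourier (-1) x := by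
    filter_upwards [Lmul_coeFn hχ (Jop (e0 : L2)), Jop_coeFn (e0 : L2),
      ae_comp_neg he0coe] with x h1 h2 h3
    rw [h1, h2, h3, mul_one]
  have hcoeffB : ∀ n : ℤ, fourierCoeff (fun x => χ x * fourier (-1) x) n = fourierCoeff χ (n+1) := by
    intro n
    rw [fourierCoeff, fourierCoeff]
    refine integral_congr_ae ?_
    filter_upwards with x
    show fourier (-n) x • (χ x * fourier (-1) x) = fourier (-(n+1)) x • χ x
    rw [smul_eq_mul, smul_eq_mul]
    have : (-(n+1) : ℤ) = -n + -1 := by ring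
    rw [this, fourier_add]
    ring
  -- recursion
  have hrec : ∀ n : ℕ, fourierCoeff χ ((n:ℤ)) + fourierCoeff χ ((n:ℤ)+1) = 0 := by
    intro n
    have hn0 := (mem_Hardy_orth_iff _).1 hgo n
    rw [fourierCoeff_as_inner, hsplit, inner_add_right, ← fourierCoeff_as_inner,
      ← fourierCoeff_as_inner, fourierCoeff_congr_ae hA, fourierCoeff_congr_ae hB,
      hcoeffB] at hn0
    exact hn0
  have hnorm : ∀ n : ℕ, ‖fourierCoeff χ ((n:ℤ))‖ = ‖fourierCoeff χ 0‖ := by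
    intro n
    induction n with
    | zero => rfl
    | succ k ih =>
      have := hrec k
      have h2 : fourierCoeff χ ((k:ℤ)+1) = -fourierCoeff χ (k:ℤ) := by
        linear_combination this
      push_cast
      rw [h2, norm_neg]
      exact ih
  -- summability
  have hχ2 : MemLp χ 2 μ := hχ.mono_exponent le_top
  set χL : L2 := hχ2.toLp χ with hχL
  have hsummable : Summable fun n : ℕ => ‖fourierCoeff χ ((n:ℤ))‖ ^ (2:ℝ) := by
    have hm : Memℓp (fourierBasis.repr χL) 2 := (fourierBasis.repr χL).2
    have hs := hm.summable (by norm_num)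
    have hs2 : Summable fun n : ℤ => ‖fourierCoeff χ n‖ ^ (2:ℝ) := by
      refine hs.congr fun n => ?_
      rw [fourierBasis_repr, fourierCoeff_congr_ae hχ2.coeFn_toLp]
      norm_num
    exact hs2.comp_injective fun a b h => by exact_mod_cast h
  have htends : Filter.Tendsto (fun n : ℕ => ‖fourierCoeff χ ((n:ℤ))‖ ^ (2:ℝ))
      Filter.atTop (nhds 0) := hsummable.tendsto_atTop_zero
  have hconst : (fun n : ℕ => ‖fourierCoeff χ ((n:ℤ))‖ ^ (2:ℝ))
      = fun _ => ‖fourierCoeff χ 0‖ ^ (2:ℝ) := by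
    funext n; rw [hnorm n]
  rw [hconst] at htends
  have hzero : ‖fourierCoeff χ 0‖ ^ (2:ℝ) = 0 :=
    tendsto_nhds_unique tendsto_const_nhds htends
  -- but the zeroth coefficient is μ K ≠ 0
  have hc0 : fourierCoeff χ 0 = ((μ K).toReal : ℂ) := by
    rw [fourierCoeff]
    have : ∫ x, fourier (-0 : ℤ) x • χ x ∂μ = ∫ x, χ x ∂μ := by
      refine integral_congr_ae ?_
      filter_upwards with x
      rw [neg_zero, fourier_zero, one_smul]
    rw [this, hχdef]
    have hind : ∫ x, K.indicator (1 : 𝕋 → ℂ) x ∂μ = (μ K).toReal • (1:ℂ) :=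
      integral_indicator_const (1:ℂ) hK
    rw [hind]
    simp [Complex.real_smul]
  rw [hc0] at hzero
  have hne : ((μ K).toReal : ℂ) ≠ 0 := by
    simp only [ne_eq, Complex.ofReal_eq_zero]
    exact (ENNReal.toReal_pos hpos.ne' (measure_ne_top μ K)).ne'
  rw [Real.rpow_eq_zero (norm_nonneg _) (by norm_num)] at hzero
  exact hne (norm_eq_zero.mp hzero)

end NonZero
section Rank

theorem flip_indicator {K : Set 𝕋} (h : ∀ x : 𝕋, x ∈ K ↔ -x ∈ K) :
    flip (Set.indicator K (1 : 𝕋 → ℂ)) = Set.indicator K (1 : 𝕋 → ℂ) := by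
  funext x
  show Set.indicator K (1 : 𝕋 → ℂ) (-x) = Set.indicator K (1 : 𝕋 → ℂ) x
  by_cases hx : x ∈ K
  · rw [Set.indicator_of_mem ((h x).mp hx), Set.indicator_of_mem hx]
    rfl
  · rw [Set.indicator_of_notMem (fun hc => hx ((h x).mpr hc)), Set.indicator_of_notMem hx]

theorem Mop_indicator_idem {K : Set 𝕋} (hK : MeasurableSet K) (h : ∀ x : 𝕋, x ∈ K ↔ -x ∈ K) :
    Mop (Set.indicator K (1 : 𝕋 → ℂ)) ∘L Mop (Set.indicator K (1 : 𝕋 → ℂ))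
      = Mop (Set.indicator K (1 : 𝕋 → ℂ)) := by
  have hmul : Set.indicator K (1 : 𝕋 → ℂ) * Set.indicator K (1 : 𝕋 → ℂ)
      = Set.indicator K (1 : 𝕋 → ℂ) := by
    funext x; by_cases hx : x ∈ K <;> simp [hx]
  rw [Mop_mul (memtop_indicator hK) (memtop_indicator hK)
    (by rw [hmul]; exact memtop_indicator hK)
    (Filter.EventuallyEq.of_eq (flip_indicator h)), hmul]

theorem Mop_indicator_disj {K K' : Set 𝕋} (hK : MeasurableSet K) (hK' : MeasurableSet K')
    (h : ∀ x : 𝕋, x ∈ K' ↔ -x ∈ K') (hd : Disjoint K K') :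
    Mop (Set.indicator K (1 : 𝕋 → ℂ)) ∘L Mop (Set.indicator K' (1 : 𝕋 → ℂ)) = 0 := by
  have hmul : Set.indicator K (1 : 𝕋 → ℂ) * Set.indicator K' (1 : 𝕋 → ℂ) = 0 := by
    funext x
    by_cases hx : x ∈ K
    · have hx' : x ∉ K' := fun hc => (Set.disjoint_left.mp hd hx) hc
      simp [hx, hx']
    · simp [hx]
  rw [Mop_mul (memtop_indicator hK) (memtop_indicator hK')
    (by rw [hmul]; exact memLp_top_const (0:ℂ) |>.ae_eq (by rfl))
    (Filter.EventuallyEq.of_eq (flip_indicator h)), hmul, Mop_zero]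

theorem indicator_iUnion_eq_sum {n : ℕ} (K : Fin n → Set 𝕋)
    (hdisj : Pairwise (Function.onFun Disjoint K)) :
    Set.indicator (⋃ i, K i) (1 : 𝕋 → ℂ) = ∑ i : Fin n, Set.indicator (K i) (1 : 𝕋 → ℂ) := by
  funext x
  rw [Finset.sum_apply]
  by_cases hx : x ∈ ⋃ i, K i
  · obtain ⟨j, hj⟩ := Set.mem_iUnion.mp hx
    rw [Set.indicator_of_mem hx, Finset.sum_eq_single j]
    · rw [Set.indicator_of_mem hj]
    · intro i _ hij
      exact Set.indicator_of_notMem (fun hc => (Set.disjoint_left.mp (hdisj hij) hc) hj) _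
    · intro hj'; exact absurd (Finset.mem_univ j) hj'
  · rw [Set.indicator_of_notMem hx]
    refine (Finset.sum_eq_zero fun i _ => ?_).symm
    exact Set.indicator_of_notMem (fun hc => hx (Set.mem_iUnion.mpr ⟨i, hc⟩)) _

theorem Mop_sum {ι : Type} (s : Finset ι) (φ : ι → 𝕋 → ℂ) (h : ∀ i ∈ s, MemLp (φ i) ⊤ μ) :
    Mop (∑ i ∈ s, φ i) = ∑ i ∈ s, Mop (φ i) := by
  classical
  induction s using Finset.induction with
  | empty => simpa using Mop_zero
  | @insert a s ha ih =>
    rw [Finset.sum_insert ha, Finset.sum_insert ha,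
      Mop_add (h a (Finset.mem_insert_self a s))
        (memLp_finset_sum' s fun i hi => h i (Finset.mem_insert_of_mem hi)),
      ih fun i hi => h i (Finset.mem_insert_of_mem hi)]

theorem rank_ge (n : ℕ) (K : Fin n → Set 𝕋) (hm : ∀ i, MeasurableSet (K i))
    (hpos : ∀ i, 0 < μ (K i)) (hdisj : Pairwise (Function.onFun Disjoint K))
    (heven : ∀ i, ∀ x : 𝕋, x ∈ K i ↔ -x ∈ K i) :
    (n : Cardinal) ≤ Module.rank ℂ
      (LinearMap.range (Mop (Set.indicator (⋃ i, K i) (1 : 𝕋 → ℂ)) : Hardy →ₗ[ℂ] Hardy)) := by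
  classical
  set M : Fin n → (Hardy →L[ℂ] Hardy) := fun i => Mop (Set.indicator (K i) (1 : 𝕋 → ℂ)) with hM
  set Mu : Hardy →L[ℂ] Hardy := Mop (Set.indicator (⋃ i, K i) (1 : 𝕋 → ℂ)) with hMudef
  have hMu : Mu = ∑ i, M i := by
    rw [hMudef, indicator_iUnion_eq_sum K hdisj,
      Mop_sum Finset.univ _ (fun i _ => memtop_indicator (hm i))]
  have hne : ∀ i, M i ≠ 0 := fun i => Mop_indicator_ne_zero (hm i) (hpos i)
  have hex : ∀ i, ∃ v : Hardy, M i v ≠ 0 := by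
    intro i
    by_contra hc
    push_neg at hc
    exact hne i (ContinuousLinearMap.ext fun v => hc v)
  choose x hx using hex
  set y : Fin n → Hardy := fun i => M i (x i) with hy
  have hMij : ∀ i j (v : Hardy), i ≠ j → M i (M j v) = 0 := by
    intro i j v hij
    have h1 : M i ∘L M j = 0 := Mop_indicator_disj (hm i) (hm j) (heven j) (hdisj hij)
    calc M i (M j v) = (M i ∘L M j) v := rfl
      _ = 0 := by rw [h1]; rfl
  have hMii : ∀ i (v : Hardy), M i (M i v) = M i v := by
    intro i v
    have h1 : M i ∘L M i = M i := Mop_indicator_idem (hm i) (heven i)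
    calc M i (M i v) = (M i ∘L M i) v := rfl
      _ = M i v := by rw [h1]
  have hMiy : ∀ i j, M i (y j) = if i = j then y i else 0 := by
    intro i j
    by_cases hij : i = j
    · subst hij; rw [if_pos rfl, hy]; exact hMii i (x i)
    · rw [if_neg hij, hy]; exact hMij i j (x j) hij
  have hMuy : ∀ i, Mu (y i) = y i := by
    intro i
    rw [hMu, ContinuousLinearMap.sum_apply, Finset.sum_eq_single i]
    · rw [hMiy i i, if_pos rfl]
    · intro j _ hji; rw [hMiy j i, if_neg hji]
    · intro hi; exact absurd (Finset.mem_univ i) hi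
  have hyr : ∀ i, y i ∈ LinearMap.range (Mu : Hardy →ₗ[ℂ] Hardy) := fun i => ⟨y i, hMuy i⟩
  set z : Fin n → LinearMap.range (Mu : Hardy →ₗ[ℂ] Hardy) := fun i => ⟨y i, hyr i⟩ with hz
  have hli : LinearIndependent ℂ y := by
    rw [linearIndependent_iff']
    intro s g hsum i hi
    have h2 := congrArg (M i) hsum
    rw [map_sum, map_zero] at h2
    have h3 : ∀ j ∈ s, M i (g j • y j) = if i = j then g j • y j else 0 := by
      intro j _
      rw [_root_.map_smul, hMiy i j]
      by_cases hij : i = j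
      · subst hij; rw [if_pos rfl, if_pos rfl]
      · rw [if_neg hij, if_neg hij, smul_zero]
    rw [Finset.sum_congr rfl h3, Finset.sum_ite_eq s i (fun j => g j • y j), if_pos hi] at h2
    have hyi : y i ≠ 0 := hx i
    rcases smul_eq_zero.mp h2 with hg | hy0
    · exact hg
    · exact absurd hy0 hyi
  have hliz : LinearIndependent ℂ z := by
    refine LinearIndependent.of_comp (LinearMap.range (Mu : Hardy →ₗ[ℂ] Hardy)).subtype ?_
    have : (LinearMap.range (Mu : Hardy →ₗ[ℂ] Hardy)).subtype ∘ z = y := rfl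
    rw [this]
    exact hli
  calc (n : Cardinal) = Cardinal.mk (Fin n) := by simp
    _ ≤ Module.rank ℂ (LinearMap.range (Mu : Hardy →ₗ[ℂ] Hardy)) := hliz.cardinal_le_rank
    _ = _ := by rw [hMudef]

end Rank
section Split

theorem aux_minmax {T t r d : ℝ} (hd : 0 ≤ d) (h : 2*t - 2*r ≤ d) :
    max (min T (2*t)) 0 - max (min T (2*r)) 0 ≤ d := by
  have h1 : min T (2*t) ≤ min T (2*r) + d := by
    rcases min_cases T (2*t) with ⟨h1a, h1b⟩ | ⟨h1a, h1b⟩ <;>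
      rcases min_cases T (2*r) with ⟨h2a, h2b⟩ | ⟨h2a, h2b⟩ <;> rw [h1a, h2a] <;> linarith
  have h2 : (0:ℝ) ≤ min T (2*r) + d ∨ True := Or.inr trivial
  rcases max_cases (min T (2*t)) 0 with ⟨ha, ha'⟩ | ⟨ha, ha'⟩ <;>
    rcases max_cases (min T (2*r)) 0 with ⟨hb, hb'⟩ | ⟨hb, hb'⟩ <;> rw [ha, hb] <;> linarith

set_option maxHeartbeats 1000000 in
theorem exists_even_partition {K : Set 𝕋} (hK : MeasurableSet K) (hpos : 0 < μ K)
    (heven : ∀ x : 𝕋, x ∈ K ↔ -x ∈ K) (n : ℕ) (hn : 0 < n) :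
    ∃ P : Fin n → Set 𝕋, (∀ i, MeasurableSet (P i)) ∧ (∀ i, 0 < μ (P i)) ∧
      Pairwise (Function.onFun Disjoint P) ∧ (∀ i, ∀ x : 𝕋, x ∈ P i ↔ -x ∈ P i) ∧
      (∀ i, P i ⊆ K) ∧ μ (K \ ⋃ i, P i) = 0 := by
  have hTp : (0:ℝ) < Tp := Fact.out
  have hπ := Real.pi_gt_three
  have hn' : ((n:ℝ)) ≠ 0 := Nat.cast_ne_zero.mpr hn.ne'
  have hnpos : (0:ℝ) < n := Nat.cast_pos.mpr hn
  set B : ℝ → Set 𝕋 := fun r => Metric.closedBall (0:𝕋) r with hB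
  have hBmeas : ∀ r, MeasurableSet (B r) := fun r => measurableSet_closedBall
  have hBmono : ∀ {r t : ℝ}, r ≤ t → B r ⊆ B t := fun h => Metric.closedBall_subset_closedBall h
  have hfin : ∀ (A : Set 𝕋), μ A ≠ ⊤ := fun A => measure_ne_top μ A
  set F : ℝ → ℝ := fun r => (μ (K ∩ B r)).toReal with hF
  have hμvol : ∀ (A : Set 𝕋), (volume A).toReal = Tp * (μ A).toReal := by
    intro A
    have h1 : (volume : Measure 𝕋) A = ENNReal.ofReal Tp * μ A := by
      rw [AddCircle.volume_eq_smul_haarAddCircle]; rfl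
    rw [h1, ENNReal.toReal_mul, ENNReal.toReal_ofReal hTp.le]
  have hBvol : ∀ r t : ℝ, r ≤ t → (μ (B t \ B r)).toReal ≤ t - r := by
    intro r t hrt
    have hsub : B r ⊆ B t := hBmono hrt
    have hd : volume (B t \ B r) = volume (B t) - volume (B r) :=
      measure_diff hsub (hBmeas r).nullMeasurableSet (measure_ne_top _ _)
    have hle : volume (B r) ≤ volume (B t) := measure_mono hsub
    have h2 : (volume (B t \ B r)).toReal = (volume (B t)).toReal - (volume (B r)).toReal := by
      rw [hd, ENNReal.toReal_sub_of_le hle (measure_ne_top _ _)]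
    have h3 : (volume (B t)).toReal = max (min Tp (2*t)) 0 := by
      rw [hB]
      show (volume (Metric.closedBall (0:𝕋) t)).toReal = _
      rw [AddCircle.volume_closedBall, ENNReal.toReal_ofReal']
    have h4 : (volume (B r)).toReal = max (min Tp (2*r)) 0 := by
      rw [hB]
      show (volume (Metric.closedBall (0:𝕋) r)).toReal = _
      rw [AddCircle.volume_closedBall, ENNReal.toReal_ofReal']
    have h5 : max (min Tp (2*t)) 0 - max (min Tp (2*r)) 0 ≤ 2*(t-r) :=
      aux_minmax (by linarith) (by linarith)
    have h6 := hμvol (B t \ B r)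
    -- Tp * (μ (B t \ B r)).toReal ≤ 2*(t-r) ≤ Tp * (t - r)
    have h7 : Tp * (μ (B t \ B r)).toReal ≤ 2*(t-r) := by
      rw [← h6, h2, h3, h4]; exact h5
    have h2π : (6:ℝ) < Tp := by
      show (6:ℝ) < 2 * Real.pi
      linarith
    by_contra hgt
    push_neg at hgt
    have hx0 : 0 < (μ (B t \ B r)).toReal := lt_of_le_of_lt (sub_nonneg.mpr hrt) hgt
    have e1 : Tp * (μ (B t \ B r)).toReal < Tp * (μ (B t \ B r)).toReal :=
      calc Tp * (μ (B t \ B r)).toReal ≤ 2*(t-r) := h7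
        _ < 2 * (μ (B t \ B r)).toReal := by linarith
        _ ≤ Tp * (μ (B t \ B r)).toReal :=
            mul_le_mul_of_nonneg_right (by linarith) hx0.le
    exact absurd e1 (lt_irrefl _)
  have hmonoF : Monotone F := by
    intro r t h
    exact ENNReal.toReal_mono (hfin _) (measure_mono (Set.inter_subset_inter_right K (hBmono h)))
  have hFdiff : ∀ r t : ℝ, r ≤ t → F t - F r ≤ t - r := by
    intro r t hrt
    have hsub : K ∩ B r ⊆ K ∩ B t := Set.inter_subset_inter_right _ (hBmono hrt)
    have hadd := measure_add_diff (μ := μ) ((hK.inter (hBmeas r)).nullMeasurableSet) (K ∩ B t)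
    rw [Set.union_eq_self_of_subset_left hsub] at hadd
    have hdsub : (K ∩ B t) \ (K ∩ B r) ⊆ B t \ B r := by
      rintro x ⟨⟨hxK, hxB⟩, hx2⟩
      exact ⟨hxB, fun hc => hx2 ⟨hxK, hc⟩⟩
    have hdle : (μ ((K ∩ B t) \ (K ∩ B r))).toReal ≤ t - r :=
      le_trans (ENNReal.toReal_mono (hfin _) (measure_mono hdsub)) (hBvol r t hrt)
    have heq : F t = F r + (μ ((K ∩ B t) \ (K ∩ B r))).toReal := by
      show (μ (K ∩ B t)).toReal = _
      rw [← hadd, ENNReal.toReal_add (hfin _) (hfin _)]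
    linarith
  have hlip : LipschitzWith 1 F := by
    apply LipschitzWith.of_dist_le_mul
    intro a b
    rw [NNReal.coe_one, one_mul, Real.dist_eq, Real.dist_eq]
    rcases le_total a b with h | h
    · rw [abs_of_nonpos (sub_nonpos.mpr (hmonoF h)), abs_of_nonpos (sub_nonpos.mpr h)]
      have := hFdiff a b h; linarith
    · rw [_root_.abs_of_nonneg (sub_nonneg.mpr (hmonoF h)), _root_.abs_of_nonneg (sub_nonneg.mpr h)]
      have := hFdiff b a h; linarith
  have hcont : Continuous F := hlip.continuous
  set c : ℝ := (μ K).toReal with hc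
  have hcpos : 0 < c := ENNReal.toReal_pos hpos.ne' (hfin K)
  have hF0 : F (-1) = 0 := by
    have hBe : B (-1) = ∅ := Metric.closedBall_eq_empty.mpr (by norm_num)
    show (μ (K ∩ B (-1))).toReal = 0
    rw [hBe, Set.inter_empty, measure_empty, ENNReal.toReal_zero]
  have hμTp : μ (K ∩ B Tp) = μ K := by
    have h1 : volume (B Tp) = ENNReal.ofReal Tp := by
      rw [hB]
      show volume (Metric.closedBall (0:𝕋) Tp) = _
      rw [AddCircle.volume_closedBall, min_eq_left (by linarith : Tp ≤ 2*Tp)]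
    have hcompl : μ ((B Tp)ᶜ) = 0 := by
      have hv : (volume : Measure 𝕋) ((B Tp)ᶜ) = 0 := by
        have hmc := measure_compl (hBmeas Tp) (measure_ne_top volume _)
        have huniv : (volume : Measure 𝕋) Set.univ = ENNReal.ofReal Tp := by
          rw [AddCircle.volume_eq_smul_haarAddCircle]
          show ENNReal.ofReal Tp * μ Set.univ = _
          rw [measure_univ, mul_one]
        rw [hmc, h1, huniv, tsub_self]
      have hrel : (volume : Measure 𝕋) ((B Tp)ᶜ) = ENNReal.ofReal Tp * μ ((B Tp)ᶜ) := by
        rw [AddCircle.volume_eq_smul_haarAddCircle]; rfl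
      rw [hrel] at hv
      rcases mul_eq_zero.mp hv with h | h
      · exact absurd h (by
          simp only [ne_eq, ENNReal.ofReal_eq_zero, not_le]
          linarith)
      · exact h
    have hdiff0 : μ (K \ B Tp) = 0 := measure_mono_null (fun x hx => hx.2) hcompl
    have := measure_inter_add_diff (μ := μ) K (hBmeas Tp)
    rw [hdiff0, add_zero] at this
    exact this
  have hFTp : F Tp = c := by
    show (μ (K ∩ B Tp)).toReal = c
    rw [hμTp]
  -- quantiles
  set S : ℕ → Set ℝ := fun i => {x : ℝ | x ∈ Set.Icc (-1:ℝ) Tp ∧ (i:ℝ) * c / n ≤ F x} with hS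
  have hTpmem : ∀ i : ℕ, i ≤ n → Tp ∈ S i := by
    intro i hi
    refine ⟨⟨by linarith, le_refl _⟩, ?_⟩
    rw [hFTp]
    have hij : (i:ℝ) ≤ (n:ℝ) := Nat.cast_le.mpr hi
    calc (i:ℝ)*c/n ≤ (n:ℝ)*c/n := by gcongr
      _ = c := by field_simp
  have hSbdd : ∀ i, BddBelow (S i) := fun i => ⟨-1, fun x hx => hx.1.1⟩
  have hSclosed : ∀ i, IsClosed (S i) := by
    intro i
    have hdes : S i = Set.Icc (-1:ℝ) Tp ∩ F ⁻¹' Set.Ici ((i:ℝ)*c/n) := rfl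
    rw [hdes]
    exact isClosed_Icc.inter (isClosed_Ici.preimage hcont)
  set s : ℕ → ℝ := fun i => sInf (S i) with hsdef
  have hmemS : ∀ i ≤ n, s i ∈ S i := fun i hi => (hSclosed i).csInf_mem ⟨Tp, hTpmem i hi⟩ (hSbdd i)
  have hsmono : ∀ i j : ℕ, i ≤ j → j ≤ n → s i ≤ s j := by
    intro i j hij hj
    apply csInf_le_csInf (hSbdd i) ⟨Tp, hTpmem j hj⟩
    intro x hx
    refine ⟨hx.1, le_trans ?_ hx.2⟩
    have : (i:ℝ) ≤ (j:ℝ) := Nat.cast_le.mpr hij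
    gcongr
  have hFs : ∀ i, i ≤ n → F (s i) = (i:ℝ)*c/n := by
    intro i hi
    have hmem := hmemS i hi
    refine le_antisymm ?_ hmem.2
    by_contra hlt
    push_neg at hlt
    have hivt := intermediate_value_Icc (hmem.1.1 : (-1:ℝ) ≤ s i) hcont.continuousOn
    have hval : (i:ℝ)*c/n ∈ Set.Icc (F (-1)) (F (s i)) := ⟨by rw [hF0]; positivity, hlt.le⟩
    obtain ⟨x, hxIcc, hFx⟩ := hivt hval
    have hxS : x ∈ S i := ⟨⟨hxIcc.1, le_trans hxIcc.2 hmem.1.2⟩, hFx.ge⟩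
    have hsix := csInf_le (hSbdd i) hxS
    have hxeq : x = s i := le_antisymm hxIcc.2 hsix
    rw [hxeq] at hFx
    exact hlt.ne' hFx
  -- the pieces
  set P : Fin n → Set 𝕋 := fun i => K ∩ (B (s ((i:ℕ)+1)) \ B (s (i:ℕ))) with hP
  have hPmeas : ∀ i, MeasurableSet (P i) := fun i =>
    hK.inter ((hBmeas _).diff (hBmeas _))
  have hPsub : ∀ i, P i ⊆ K := fun i => Set.inter_subset_left
  have hPval : ∀ i : Fin n, (μ (P i)).toReal = c / n := by
    intro i
    have hi1 : (i:ℕ) + 1 ≤ n := i.isLt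
    have hi0 : (i:ℕ) ≤ n := le_of_lt i.isLt
    have hss : s (i:ℕ) ≤ s ((i:ℕ)+1) := hsmono _ _ (Nat.le_succ _) hi1
    have hsub : K ∩ B (s (i:ℕ)) ⊆ K ∩ B (s ((i:ℕ)+1)) :=
      Set.inter_subset_inter_right _ (hBmono hss)
    have hadd := measure_add_diff (μ := μ) ((hK.inter (hBmeas (s (i:ℕ)))).nullMeasurableSet)
      (K ∩ B (s ((i:ℕ)+1)))
    rw [Set.union_eq_self_of_subset_left hsub] at hadd
    have hPieq : (K ∩ B (s ((i:ℕ)+1))) \ (K ∩ B (s (i:ℕ))) = P i := by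
      ext x
      constructor
      · rintro ⟨⟨hxK, hxB⟩, h2⟩
        exact ⟨hxK, hxB, fun hc => h2 ⟨hxK, hc⟩⟩
      · rintro ⟨hxK, hxB, hxnB⟩
        exact ⟨⟨hxK, hxB⟩, fun hc => hxnB hc.2⟩
    rw [hPieq] at hadd
    have htoReal : F (s ((i:ℕ)+1)) = F (s (i:ℕ)) + (μ (P i)).toReal := by
      show (μ (K ∩ B (s ((i:ℕ)+1)))).toReal = _
      rw [← hadd, ENNReal.toReal_add (hfin _) (hfin _)]
    rw [hFs _ hi1, hFs _ hi0] at htoReal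
    have : (((i:ℕ)+1 : ℕ):ℝ) = (i:ℝ) + 1 := by push_cast; ring
    rw [this] at htoReal
    have := htoReal
    field_simp at this ⊢
    linarith
  have hPpos : ∀ i, 0 < μ (P i) := by
    intro i
    rcases eq_or_ne (μ (P i)) 0 with h | h
    · exfalso
      have := hPval i
      rw [h, ENNReal.toReal_zero] at this
      have hcn : 0 < c / n := by positivity
      linarith
    · exact pos_iff_ne_zero.mpr h
  have hPdisj : Pairwise (Function.onFun Disjoint P) := by
    have key : ∀ i j : Fin n, (i:ℕ) < (j:ℕ) → Disjoint (P i) (P j) := by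
      intro i j hij
      rw [Set.disjoint_left]
      rintro x ⟨hxK, hxB, hxnB⟩ ⟨hxK', hxB', hxnB'⟩
      have h1 : s ((i:ℕ)+1) ≤ s (j:ℕ) := hsmono _ _ (by omega) (le_of_lt j.isLt)
      exact hxnB' (hBmono h1 hxB)
    intro i j hij
    rcases lt_or_gt_of_ne (fun h : (i:ℕ) = (j:ℕ) => hij (Fin.ext h)) with h | h
    · exact key i j h
    · exact (key j i h).symm
  have hPeven : ∀ i, ∀ x : 𝕋, x ∈ P i ↔ -x ∈ P i := by
    have hBev : ∀ r (x : 𝕋), x ∈ B r ↔ -x ∈ B r := by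
      intro r x
      show x ∈ Metric.closedBall (0:𝕋) r ↔ -x ∈ Metric.closedBall (0:𝕋) r
      rw [mem_closedBall_zero_iff, mem_closedBall_zero_iff, norm_neg]
    intro i x
    constructor
    · rintro ⟨h1, h2, h3⟩
      exact ⟨(heven x).mp h1, (hBev _ x).mp h2, fun hc => h3 ((hBev _ x).mpr hc)⟩
    · rintro ⟨h1, h2, h3⟩
      exact ⟨(heven x).mpr h1, (hBev _ x).mpr h2, fun hc => h3 ((hBev _ x).mp hc)⟩
  refine ⟨P, hPmeas, hPpos, hPdisj, hPeven, hPsub, ?_⟩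
  -- covering
  have hcover : ∀ m : ℕ, m ≤ n → ∀ x : 𝕋, x ∈ K → x ∈ B (s m) →
      x ∈ B (s 0) ∨ ∃ i : Fin n, x ∈ P i := by
    intro m
    induction m with
    | zero => intro _ x _ hx; exact Or.inl hx
    | succ k ih =>
      intro hk x hxK hxB
      by_cases hxk : x ∈ B (s k)
      · exact ih (by omega) x hxK hxk
      · exact Or.inr ⟨⟨k, by omega⟩, ⟨hxK, hxB, hxk⟩⟩
  have h1 : μ (K ∩ B (s 0)) = 0 := by
    have ht : (μ (K ∩ B (s 0))).toReal = 0 := by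
      have : (μ (K ∩ B (s 0))).toReal = F (s 0) := rfl
      rw [this, hFs 0 (by omega)]
      simp
    rcases (ENNReal.toReal_eq_zero_iff _).mp ht with h | h
    · exact h
    · exact absurd h (hfin _)
  have h2 : μ (K \ B (s n)) = 0 := by
    have hKB : μ (K ∩ B (s n)) = μ K := by
      apply (ENNReal.toReal_eq_toReal_iff' (hfin _) (hfin _)).mp
      show F (s n) = c
      rw [hFs n le_rfl]
      field_simp
    have hiad := measure_inter_add_diff (μ := μ) K (hBmeas (s n))
    rw [hKB] at hiad
    have hiad' : μ K + μ (K \ B (s n)) = μ K + 0 := by rw [add_zero]; exact hiad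
    exact (ENNReal.add_right_inj (hfin K)).mp hiad'
  have hsubset : K \ (⋃ i, P i) ⊆ (K ∩ B (s 0)) ∪ (K \ B (s n)) := by
    rintro x ⟨hxK, hxU⟩
    by_cases hxB : x ∈ B (s n)
    · rcases hcover n le_rfl x hxK hxB with h | ⟨i, hi⟩
      · exact Or.inl ⟨hxK, h⟩
      · exact absurd (Set.mem_iUnion.mpr ⟨i, hi⟩) hxU
    · exact Or.inr ⟨hxK, hxB⟩
  exact measure_mono_null hsubset (measure_union_null h1 h2)

end Split
/-- For pairwise disjoint even sets `K₁,…,Kₙ` of positive measure, the `M(χ_{K_j})` are nonzero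
pairwise "orthogonal" idempotents, `dim im M(χ_{K₁∪⋯∪Kₙ}) ≥ n`; consequently `im M(χ_K)` is
infinite-dimensional for any even `K` of positive measure. -/
theorem stmt_19 (n : ℕ) (K : Fin n → Set 𝕋) (hm : ∀ i, MeasurableSet (K i))
    (hpos : ∀ i, 0 < μ (K i)) (hdisj : Pairwise (Function.onFun Disjoint K))
    (heven : ∀ i, ∀ x : 𝕋, x ∈ K i ↔ -x ∈ K i) :
    (∀ i, Mop (Set.indicator (K i) (1 : 𝕋 → ℂ)) ∘L Mop (Set.indicator (K i) (1 : 𝕋 → ℂ)) =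
        Mop (Set.indicator (K i) (1 : 𝕋 → ℂ))) ∧
    (∀ i, Mop (Set.indicator (K i) (1 : 𝕋 → ℂ)) ≠ 0) ∧
    (∀ i j, i ≠ j → Mop (Set.indicator (K i) (1 : 𝕋 → ℂ)) ∘L
        Mop (Set.indicator (K j) (1 : 𝕋 → ℂ)) = 0) ∧
    (n : Cardinal) ≤ Module.rank ℂ
        (LinearMap.range (Mop (Set.indicator (⋃ i, K i) (1 : 𝕋 → ℂ)) : Hardy →ₗ[ℂ] Hardy)) ∧
    (∀ K' : Set 𝕋, MeasurableSet K' → 0 < μ K' → (∀ x : 𝕋, x ∈ K' ↔ -x ∈ K') →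
      ¬ FiniteDimensional ℂ
        (LinearMap.range (Mop (Set.indicator K' (1 : 𝕋 → ℂ)) : Hardy →ₗ[ℂ] Hardy))) := by
  refine ⟨fun i => Mop_indicator_idem (hm i) (heven i),
    fun i => Mop_indicator_ne_zero (hm i) (hpos i),
    fun i j hij => Mop_indicator_disj (hm i) (hm j) (heven j) (hdisj hij),
    rank_ge n K hm hpos hdisj heven, ?_⟩
  intro K' hK' hpos' heven' hfd
  set N : ℕ := Module.finrank ℂ
    (LinearMap.range (Mop (Set.indicator K' (1 : 𝕋 → ℂ)) : Hardy →ₗ[ℂ] Hardy)) + 1 with hN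
  obtain ⟨P, hPm, hPpos, hPdisj, hPeven, hPsub, hPcov⟩ :=
    exists_even_partition hK' hpos' heven' N (Nat.succ_pos _)
  have hrank := rank_ge N P hPm hPpos hPdisj hPeven
  have hae : Set.indicator (⋃ i, P i) (1 : 𝕋 → ℂ) =ᵐ[μ] Set.indicator K' (1 : 𝕋 → ℂ) := by
    have h0 := measure_eq_zero_iff_ae_notMem.mp hPcov
    filter_upwards [h0] with x hx
    by_cases hxU : x ∈ ⋃ i, P i
    · obtain ⟨i, hi⟩ := Set.mem_iUnion.mp hxU
      rw [Set.indicator_of_mem hxU, Set.indicator_of_mem (hPsub i hi)]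
    · rw [Set.indicator_of_notMem hxU,
        Set.indicator_of_notMem (fun hc => hx ⟨hc, hxU⟩)]
  rw [Mop_congr hae] at hrank
  have hfr : ((Module.finrank ℂ
      (LinearMap.range (Mop (Set.indicator K' (1 : 𝕋 → ℂ)) : Hardy →ₗ[ℂ] Hardy)) : Cardinal)) =
      Module.rank ℂ (LinearMap.range (Mop (Set.indicator K' (1 : 𝕋 → ℂ)) : Hardy →ₗ[ℂ] Hardy)) :=
    Module.finrank_eq_rank ℂ _
  rw [← hfr] at hrank
  have : N ≤ Module.finrank ℂ (LinearMap.range (Mop (Set.indicator K' (1 : 𝕋 → ℂ)) : Hardy →ₗ[ℂ] Hardy)) :=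
    Nat.cast_le.mp hrank
  omega

end TH
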